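/- Let 𝔾 be a normalized distance graph. Let ↑𝔾 be obtained from 𝔾 by: for every history clock x ∈ X_H, replacing 𝔾_{0x} by (<,+∞) if 𝔾_{0x} ≠ (≤,+∞); for every future clock x ∈ X_F, replacing 𝔾_{0x} by (≤,0) if 𝔾_{0x} ≠ (≤,-∞); and leaving all other edge weights unchanged. Then ⟦↑𝔾⟧ = ↑⟦𝔾⟧, where ↑W := {v+δ : v ∈ W, δ ≥ 0 real, (v+δ)(x) ≤ 0 for all x ∈ X_F}. -/

import Mathlib

noncomputable section

open Classical

attribute [local instance] Classical.propDecidable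

namespace GTA

/-- A comparison operator: strict `<` or non-strict `≤`. -/
inductive Cmp where
  | lt : Cmp
  | le : Cmp
deriving DecidableEq

/-- `Cmp.holds ◁ a b` means `a ◁ b` in `ℝ̄ = EReal`. -/
def Cmp.holds : Cmp → EReal → EReal → Prop
  | .lt, a, b => a < b
  | .le, a, b => a ≤ b

/-- Extended addition on `ℝ̄`: `(+∞) + α = α + (+∞) = +∞` for all `α`,
and `(-∞) + β = β + (-∞) = -∞` for `β ≠ +∞`. -/
def eadd (a b : EReal) : EReal := if a = ⊤ ∨ b = ⊤ then ⊤ else a + b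

/-- Extended subtraction `β - α := β + (-α)`. -/
def esub (a b : EReal) : EReal := eadd a (-b)

/-- Constants of atomic constraints: elements of `ℤ ∪ {-∞, +∞}`. -/
inductive EConst where
  | ninf : EConst
  | int : ℤ → EConst
  | pinf : EConst
deriving DecidableEq

def EConst.toEReal : EConst → EReal
  | .ninf => ⊥
  | .int k => ((k : ℝ) : EReal)
  | .pinf => ⊤

variable {C : Type*}

/-- A valuation over the clock set `C` (vertices `Option C`, where `none` is the
special clock `0`), with future clocks `XF` and history clocks the complement of `XF`:
`v 0 = 0`, history clocks take values in `[0, +∞]`, future clocks in `[-∞, 0]`. -/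
structure Val (C : Type*) (XF : Set C) where
  toFun : Option C → EReal
  zero' : toFun none = 0
  hist' : ∀ x : C, x ∉ XF → 0 ≤ toFun (some x)
  fut' : ∀ x : C, x ∈ XF → toFun (some x) ≤ 0

/-- Shift of a clock map by a real delay `δ`: every clock in `X` increases by `δ`,
the special clock `0` keeps value `0`. -/
def shift (u : Option C → EReal) (δ : ℝ) : Option C → EReal
  | none => 0
  | some x => eadd (u (some x)) ((δ : ℝ) : EReal)

/-- An atomic constraint `y - x ◁ c` with `x, y ∈ X ∪ {0}` and `c ∈ ℤ ∪ {-∞,+∞}`. -/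
structure Atom (C : Type*) where
  y : Option C
  x : Option C
  cmp : Cmp
  c : EConst

/-- Satisfaction `u ⊨ y - x ◁ c`, i.e. `u(y) - u(x) ◁ c` with extended subtraction. -/
def asat (u : Option C → EReal) (φ : Atom C) : Prop :=
  φ.cmp.holds (esub (u φ.y) (u φ.x)) φ.c.toEReal

/-- The simulation preorder `≼_G` on clock maps: for every `φ ∈ G` and every real
`δ ≥ 0`, `u + δ ⊨ φ` implies `u' + δ ⊨ φ`. -/
def simLeFun (G : Set (Atom C)) (u u' : Option C → EReal) : Prop :=
  ∀ φ ∈ G, ∀ δ : ℝ, 0 ≤ δ → asat (shift u δ) φ → asat (shift u' δ) φ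

/-- `v ≼_G v'` on valuations. -/
def simLe (XF : Set C) (G : Set (Atom C)) (v v' : Val C XF) : Prop :=
  simLeFun G v.toFun v'.toFun

/-- `v' ∈ [R]v`: history clocks in `R` are reset to `0`, future clocks in `R` are
released (any value in `[-∞,0]`, automatic for valuations), other clocks unchanged. -/
def releaseRel (XF : Set C) (R : Set C) (v v' : Val C XF) : Prop :=
  (∀ x ∈ R, x ∉ XF → v'.toFun (some x) = 0) ∧
  ∀ x : C, x ∉ R → v'.toFun (some x) = v.toFun (some x)

/-- `[R]Z`. -/
def changeSet (XF : Set C) (R : Set C) (Z : Set (Val C XF)) : Set (Val C XF) :=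
  { v' | ∃ v ∈ Z, releaseRel XF R v v' }

/-- Time elapse `↑Z = {v + δ : v ∈ Z, δ ≥ 0, (v+δ)(x) ≤ 0 for all future x}`
(the latter condition is automatic since elements are valuations). -/
def elapseSet (XF : Set C) (Z : Set (Val C XF)) : Set (Val C XF) :=
  { w | ∃ v ∈ Z, ∃ δ : ℝ, 0 ≤ δ ∧ w.toFun = shift v.toFun δ }

/-- Membership of a vertex in a set of clocks (the clock `0` is in no such set). -/
def inR (R : Set C) : Option C → Prop
  | none => False
  | some x => x ∈ R

/-- `pre([R])(G)`. -/
def preChange (R : Set C) (G : Set (Atom C)) : Set (Atom C) :=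
  { ψ | ∃ φ ∈ G,
      (¬ inR R φ.x ∧ ¬ inR R φ.y ∧ ψ = φ) ∨
      (inR R φ.x ∧ ¬ inR R φ.y ∧ ψ = { φ with x := none }) ∨
      (¬ inR R φ.x ∧ inR R φ.y ∧ ψ = { φ with y := none }) }

/-- Instantaneous timed programs: guards (finite conjunctions of atomic constraints),
changes `[R]`, and sequential composition. -/
inductive Prog (C : Type*) where
  | guard : List (Atom C) → Prog C
  | change : Set C → Prog C
  | seq : Prog C → Prog C → Prog C

/-- Semantics `v →prog v'` of programs. -/
def Prog.steps (XF : Set C) : Prog C → Val C XF → Val C XF → Prop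
  | .guard g, v, v' => (∀ φ ∈ g, asat v.toFun φ) ∧ v' = v
  | .change R, v, v' => releaseRel XF R v v'
  | .seq p q, v, v' => ∃ u, Prog.steps XF p v u ∧ Prog.steps XF q u v'

/-- `pre(prog)(G)`. -/
def Prog.pre : Prog C → Set (Atom C) → Set (Atom C)
  | .guard g, G => { φ | φ ∈ g } ∪ G
  | .change R, G => preChange R G
  | .seq p q, G => Prog.pre p (Prog.pre q G)

/-- A weight `(◁, c)` with `c ∈ ℝ̄`. -/
structure Weight where
  cmp : Cmp
  c : EReal

/-- Strict order on weights. -/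
def Weight.lt (w w' : Weight) : Prop :=
  w.c < w'.c ∨ (w.c = w'.c ∧ w.cmp = Cmp.lt ∧ w'.cmp = Cmp.le)

/-- Non-strict order on weights. -/
def Weight.le (w w' : Weight) : Prop := Weight.lt w w' ∨ w = w'

/-- Sum of weights. -/
def Weight.add (w w' : Weight) : Weight :=
  if w = ⟨Cmp.lt, ⊥⟩ ∨ w' = ⟨Cmp.lt, ⊥⟩ then ⟨Cmp.lt, ⊥⟩
  else if w = ⟨Cmp.le, ⊤⟩ ∨ w' = ⟨Cmp.le, ⊤⟩ then ⟨Cmp.le, ⊤⟩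
  else if w = ⟨Cmp.le, ⊥⟩ ∨ w' = ⟨Cmp.le, ⊥⟩ then ⟨Cmp.le, ⊥⟩
  else if w = ⟨Cmp.lt, ⊤⟩ ∨ w' = ⟨Cmp.lt, ⊤⟩ then ⟨Cmp.lt, ⊤⟩
  else ⟨if w.cmp = Cmp.le ∧ w'.cmp = Cmp.le then Cmp.le else Cmp.lt, w.c + w'.c⟩

/-- Minimum of two weights. -/
def Weight.min (w w' : Weight) : Weight := if Weight.le w w' then w else w'

/-- A weight `(◁, c)` is finite if `c ∈ ℝ`. -/
def Weight.Finite (w : Weight) : Prop := w.c ≠ ⊥ ∧ w.c ≠ ⊤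

/-- A distance graph: a weight on each ordered pair of distinct vertices of
`X ∪ {0}`; self-loops carry the trivial weight `(≤, +∞)`. -/
structure DGraph (C : Type*) where
  w : Option C → Option C → Weight
  refl' : ∀ a : Option C, w a a = ⟨Cmp.le, ⊤⟩

namespace DGraph

/-- A well-formed distance graph has no edge of weight `(<, -∞)`. -/
def WF (G : DGraph C) : Prop := ∀ a b, G.w a b ≠ ⟨Cmp.lt, ⊥⟩

/-- The semantics `⟦𝔾⟧` of a distance graph. -/
def sem (G : DGraph C) (XF : Set C) : Set (Val C XF) :=
  { v | ∀ a b : Option C, (G.w a b).cmp.holds (esub (v.toFun b) (v.toFun a)) (G.w a b).c }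

/-- Weight of the path `a₀ → a₁ → ⋯ → aₙ` given as the list `[a₀, …, aₙ]`. -/
def chainWeight (G : DGraph C) : List (Option C) → Weight
  | a :: b :: l => Weight.add (G.w a b) (G.chainWeight (b :: l))
  | _ => ⟨Cmp.le, 0⟩

end DGraph

/-- `l` is a path from `a` to `b`: at least one edge, consecutive vertices distinct. -/
def IsPath (l : List (Option C)) (a b : Option C) : Prop :=
  2 ≤ l.length ∧ l.head? = some a ∧ l.getLast? = some b ∧ l.Chain' (· ≠ ·)

namespace DGraph

/-- `𝔾` has a negative cycle: a cycle of weight strictly less than `(≤, 0)`. -/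
def HasNegCycle (G : DGraph C) : Prop :=
  ∃ (a : Option C) (l : List (Option C)),
    IsPath l a a ∧ Weight.lt (G.chainWeight l) ⟨Cmp.le, 0⟩

/-- `𝔾` is in standard form. -/
def Standard (G : DGraph C) (XF : Set C) : Prop :=
  (∀ x ∈ XF, Weight.le (G.w none (some x)) ⟨Cmp.le, 0⟩) ∧
  (∀ x : C, x ∉ XF → Weight.le (G.w (some x) none) ⟨Cmp.le, 0⟩) ∧
  (∀ x y : C, G.w (some x) (some y) ≠ ⟨Cmp.le, ⊤⟩ →
    G.w (some x) none ≠ ⟨Cmp.le, ⊤⟩ ∧ G.w none (some y) ≠ ⟨Cmp.le, ⊤⟩)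

/-- `𝔾` is normalized: standard form, no negative cycle, and every edge weight is
minimal among the weights of paths between its endpoints. -/
def Normalized (G : DGraph C) (XF : Set C) : Prop :=
  G.Standard XF ∧ ¬ G.HasNegCycle ∧
  ∀ (a b : Option C) (l : List (Option C)), a ≠ b → IsPath l a b →
    Weight.le (G.w a b) (G.chainWeight l)

/-- Weight function of the standardization of `𝔾`. -/
def stdW (G : DGraph C) (XF : Set C) : Option C → Option C → Weight
  | none, some y =>
      if y ∈ XF then Weight.min (G.w none (some y)) ⟨Cmp.le, 0⟩
      else if ∃ a : Option C, a ≠ some y ∧ G.w a (some y) ≠ ⟨Cmp.le, ⊤⟩ then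
        Weight.min (G.w none (some y)) ⟨Cmp.lt, ⊤⟩
      else G.w none (some y)
  | some x, none =>
      if x ∈ XF then
        (if ∃ b : Option C, b ≠ some x ∧ G.w (some x) b ≠ ⟨Cmp.le, ⊤⟩ then
          Weight.min (G.w (some x) none) ⟨Cmp.lt, ⊤⟩
        else G.w (some x) none)
      else Weight.min (G.w (some x) none) ⟨Cmp.le, 0⟩
  | a, b => G.w a b

/-- The standardization of a distance graph. -/
def standardize (G : DGraph C) (XF : Set C) : DGraph C where
  w := G.stdW XF
  refl' := fun a => by
    cases a with
    | none => exact G.refl' none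
    | some x => exact G.refl' (some x)

/-- Intersecting a distance graph with a single atomic constraint `y - x ◁ c`:
the weight of the edge `x → y` is replaced by `min(𝔾_{xy}, (◁, c))`. -/
def addAtom (G : DGraph C) (φ : Atom C) : DGraph C where
  w := fun a b =>
    if a = φ.x ∧ b = φ.y ∧ φ.x ≠ φ.y then
      Weight.min (G.w a b) ⟨φ.cmp, φ.c.toEReal⟩
    else G.w a b
  refl' := fun a => by
    have h : ¬ (a = φ.x ∧ a = φ.y ∧ φ.x ≠ φ.y) := by
      rintro ⟨h1, h2, h3⟩
      exact h3 (h1 ▸ h2 ▸ rfl)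
    show (if a = φ.x ∧ a = φ.y ∧ φ.x ≠ φ.y then
      Weight.min (G.w a a) ⟨φ.cmp, φ.c.toEReal⟩ else G.w a a) = ⟨Cmp.le, ⊤⟩
    rw [if_neg h]
    exact G.refl' a

/-- Intersecting a distance graph with a guard (list of atomic constraints). -/
def guardGraph (G : DGraph C) : List (Atom C) → DGraph C
  | [] => G
  | φ :: g => (G.guardGraph g).addAtom φ

/-- Edgewise minimum of two distance graphs. -/
def minG (G H : DGraph C) : DGraph C where
  w := fun a b => Weight.min (G.w a b) (H.w a b)
  refl' := fun a => by
    show Weight.min (G.w a a) (H.w a a) = _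
    rw [G.refl', H.refl']
    exact ite_self _

end DGraph

/-- The distance graph `𝔾_v^G`. -/
def upGraph (XF : Set C) (G : Set (Atom C)) (v : Val C XF) : DGraph C where
  w := fun a b =>
    match a, b with
    | some x, none =>
        if x ∈ XF then ⟨Cmp.le, -(v.toFun (some x))⟩
        else if ∃ φ ∈ G, φ.y = none ∧ φ.x = some x ∧ φ.c ≠ EConst.ninf ∧ ¬ asat v.toFun φ
          then ⟨Cmp.le, -(v.toFun (some x))⟩
        else ⟨Cmp.le, ⊤⟩
    | none, some y =>
        if y ∈ XF then ⟨Cmp.le, v.toFun (some y)⟩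
        else if ∃ φ ∈ G, φ.y = some y ∧ φ.x = none ∧ φ.c ≠ EConst.pinf ∧ asat v.toFun φ
          then ⟨Cmp.le, v.toFun (some y)⟩
        else ⟨Cmp.le, ⊤⟩
    | _, _ => ⟨Cmp.le, ⊤⟩
  refl' := fun a => by cases a <;> rfl

/-- The guard `g_v^G`: all constraints of `G` satisfied by `v`. -/
def upGuard (G : Set (Atom C)) (u : Option C → EReal) : Set (Atom C) :=
  { φ ∈ G | asat u φ }

/-- An atomic constraint is `M`-bounded. -/
def MBounded (M : ℕ) (φ : Atom C) : Prop :=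
  (∃ k : ℤ, φ.c = EConst.int k ∧ -(M : ℤ) ≤ k ∧ k ≤ (M : ℤ)) ∨
  (φ.cmp = Cmp.le ∧ φ.c = EConst.ninf) ∨ φ.c = EConst.pinf

/-- An atomic constraint is `M`-bounded integral (constant in `{-∞,+∞} ∪ [-M, M] ∩ ℤ`). -/
def MBoundedIntegral (M : ℕ) (φ : Atom C) : Prop :=
  (∃ k : ℤ, φ.c = EConst.int k ∧ -(M : ℤ) ≤ k ∧ k ≤ (M : ℤ)) ∨
  φ.c = EConst.ninf ∨ φ.c = EConst.pinf

/-- An atomic constraint is `X_D`-safe: if both endpoints are future clocks,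
they are in `X_D`. -/
def XDSafe (XF XD : Set C) (φ : Atom C) : Prop :=
  ∀ x y : C, φ.x = some x → φ.y = some y → x ∈ XF → y ∈ XF → x ∈ XD ∧ y ∈ XD

/-- Vertices in `X_F ∪ {0}`. -/
def futV (XF : Set C) : Option C → Prop
  | none => True
  | some x => x ∈ XF

/-- Vertices in `X_H ∪ {0}`. -/
def histV (XF : Set C) : Option C → Prop
  | none => True
  | some x => x ∉ XF

/-- The equivalence `v₁ ≃ v₂`: agreement on history clocks and on all
`(X_D, M)`-safe constraints over `X_F ∪ {0}`. -/
def simeqV (XF XD : Set C) (M : ℕ) (v₁ v₂ : Val C XF) : Prop :=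
  (∀ x : C, x ∉ XF → v₁.toFun (some x) = v₂.toFun (some x)) ∧
  ∀ φ : Atom C, XDSafe XF XD φ → MBounded M φ → futV XF φ.x → futV XF φ.y →
    (asat v₁.toFun φ ↔ asat v₂.toFun φ)

/-- `(X_D, M)`-safely reachable zones: obtained from the initial zone
`↑(𝕍 ∧ g₀)` (`g₀` fixing each history clock to `0` or `+∞`) by the
`(X_D, M)`-safe zone operations. -/
inductive SafeReach (XF XD : Set C) (M : ℕ) : Set (Val C XF) → Prop where
  | init (f : C → EReal) (hf : ∀ x : C, x ∉ XF → f x = 0 ∨ f x = ⊤) :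
      SafeReach XF XD M (elapseSet XF { v | ∀ x : C, x ∉ XF → v.toFun (some x) = f x })
  | guard {Z : Set (Val C XF)} (g : Set (Atom C))
      (hg : ∀ φ ∈ g, XDSafe XF XD φ ∧ MBounded M φ)
      (h : SafeReach XF XD M Z) :
      SafeReach XF XD M { v ∈ Z | ∀ φ ∈ g, asat v.toFun φ }
  | changeSimple {Z : Set (Val C XF)} (x : C) (hx : x ∉ XD) (h : SafeReach XF XD M Z) :
      SafeReach XF XD M (changeSet XF {x} Z)
  | changeD {Z : Set (Val C XF)} (x : C) (hx : x ∈ XD) (c : EReal) (hc : c = 0 ∨ c = ⊥)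
      (h : SafeReach XF XD M Z) :
      SafeReach XF XD M (changeSet XF {x} { v ∈ Z | v.toFun (some x) = c })
  | elapse {Z : Set (Val C XF)} (h : SafeReach XF XD M Z) :
      SafeReach XF XD M (elapseSet XF Z)

/-- `α ∼_K β` on `ℝ̄`. -/
def eqvK (K : ℕ) (α β : EReal) : Prop :=
  ∀ (cmp : Cmp) (c : EReal),
    (c = ⊥ ∨ c = ⊤ ∨ ∃ k : ℤ, c = ((k : ℝ) : EReal) ∧ |k| ≤ (K : ℤ)) →
    (cmp.holds α c ↔ cmp.holds β c)

/-- The equivalence `v ∼ⁿ_M v'` on valuations. -/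
def simVn (XF : Set C) (M n : ℕ) (v v' : Val C XF) : Prop :=
  (∀ x : C, eqvK (n * M) (v.toFun (some x)) (v'.toFun (some x))) ∧
  ∀ x y : C, eqvK ((n + 1) * M)
    (esub (v.toFun (some x)) (v.toFun (some y)))
    (esub (v'.toFun (some x)) (v'.toFun (some y)))

/-- The `(†)` conditions for a distance graph with bound `B` (usually `B = nM`). -/
def Dagger (XF : Set C) (B : ℕ) (G : DGraph C) : Prop :=
  (∀ x ∈ XF, (∃ b : Option C, histV XF b ∧ (G.w (some x) b).Finite) →
     Weight.le ⟨Cmp.le, 0⟩ (G.w (some x) none) ∧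
     Weight.le (G.w (some x) none) ⟨Cmp.le, ((B : ℝ) : EReal)⟩) ∧
  (∀ x ∈ XF, (G.w none (some x)).Finite →
     Weight.le ⟨Cmp.lt, ((-(B : ℝ) : ℝ) : EReal)⟩ (G.w none (some x)) ∧
     Weight.le (G.w none (some x)) ⟨Cmp.le, 0⟩) ∧
  (∀ x : C, x ∉ XF → ∀ y ∈ XF, (G.w none (some y)).Finite →
     Weight.le (Weight.add (G.w (some x) none) ⟨Cmp.lt, ((-(B : ℝ) : ℝ) : EReal)⟩)
       (G.w (some x) (some y))) ∧
  (∀ x ∈ XF, ∀ y ∈ XF, (G.w (some x) (some y)).Finite →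
     Weight.le ⟨Cmp.lt, ((-(B : ℝ) : ℝ) : EReal)⟩ (G.w (some x) (some y)) ∧
     Weight.le (G.w (some x) (some y)) ⟨Cmp.le, ((B : ℝ) : EReal)⟩)

end GTA

namespace GTA


section TimeElapseHelpers

/-! ### `eadd`/`esub` evaluation lemmas -/

lemma eadd_top_left (b : EReal) : eadd ⊤ b = ⊤ := if_pos (Or.inl rfl)

lemma eadd_top_right (a : EReal) : eadd a ⊤ = ⊤ := if_pos (Or.inr rfl)

lemma eadd_bot_coe (d : ℝ) : eadd ⊥ (d : EReal) = ⊥ := by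
  rw [eadd, if_neg (by simp)]; exact EReal.bot_add _

lemma eadd_coe_coe (a d : ℝ) : eadd (a : EReal) (d : EReal) = ((a + d : ℝ) : EReal) := by
  rw [eadd, if_neg (by simp), EReal.coe_add]

lemma esub_top_left (b : EReal) : esub ⊤ b = ⊤ := eadd_top_left _

lemma esub_coe_coe (a d : ℝ) : esub (a : EReal) (d : EReal) = ((a - d : ℝ) : EReal) := by
  rw [esub, ← EReal.coe_neg, eadd_coe_coe, sub_eq_add_neg]

lemma esub_bot_coe (d : ℝ) : esub ⊥ (d : EReal) = ⊥ := by
  rw [esub, ← EReal.coe_neg]; exact eadd_bot_coe _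

lemma esub_bot_right (a : EReal) : esub a ⊥ = ⊤ := by
  rw [esub, EReal.neg_bot]; exact eadd_top_right _

lemma esub_top_right {a : EReal} (h : a ≠ ⊤) : esub a ⊤ = ⊥ := by
  rw [esub, EReal.neg_top, eadd, if_neg (by simp [h])]; exact EReal.add_bot a

lemma esub_coe_zero (a : EReal) : esub a ((0 : ℝ) : EReal) = a := by
  induction a using EReal.rec with
  | bot => exact esub_bot_coe 0
  | coe r => rw [esub_coe_coe]; norm_num
  | top => exact esub_top_left _

lemma esub_zero (a : EReal) : esub a 0 = a := by
  rw [← EReal.coe_zero]; exact esub_coe_zero a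

lemma esub_esub_cancel (a b : EReal) (d : ℝ) :
    esub (esub a d) (esub b d) = esub a b := by
  induction a using EReal.rec with
  | top => rw [esub_top_left, esub_top_left, esub_top_left]
  | bot =>
    rw [esub_bot_coe]
    induction b using EReal.rec with
    | top =>
      rw [esub_top_left, esub_top_right bot_ne_top]
    | bot => rw [esub_bot_coe]
    | coe s => rw [esub_coe_coe, esub_bot_coe, esub_bot_coe]
  | coe r =>
    induction b using EReal.rec with
    | top =>
      rw [esub_top_left, esub_coe_coe, esub_top_right (EReal.coe_ne_top _),
        esub_top_right (EReal.coe_ne_top _)]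
    | bot => rw [esub_bot_coe, esub_coe_coe, esub_bot_right, esub_bot_right]
    | coe s =>
      rw [esub_coe_coe, esub_coe_coe, esub_coe_coe, esub_coe_coe]
      norm_num

lemma esub_eadd_cancel (a b : EReal) (d : ℝ) :
    esub (eadd a d) (eadd b d) = esub a b := by
  induction a using EReal.rec with
  | top => rw [eadd_top_left, esub_top_left, esub_top_left]
  | bot =>
    rw [eadd_bot_coe]
    induction b using EReal.rec with
    | top => rw [eadd_top_left, esub_top_right bot_ne_top]
    | bot => rw [eadd_bot_coe]
    | coe s => rw [eadd_coe_coe, esub_bot_coe, esub_bot_coe]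
  | coe r =>
    induction b using EReal.rec with
    | top =>
      rw [eadd_top_left, eadd_coe_coe, esub_top_right (EReal.coe_ne_top _),
        esub_top_right (EReal.coe_ne_top _)]
    | bot => rw [eadd_bot_coe, eadd_coe_coe, esub_bot_right, esub_bot_right]
    | coe s =>
      rw [eadd_coe_coe, eadd_coe_coe, esub_coe_coe, esub_coe_coe]
      norm_num

lemma eadd_esub_cancel (a : EReal) (d : ℝ) : eadd (esub a d) d = a := by
  induction a using EReal.rec with
  | top => rw [esub_top_left, eadd_top_left]
  | bot => rw [esub_bot_coe, eadd_bot_coe]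
  | coe r => rw [esub_coe_coe, eadd_coe_coe]; norm_num

lemma esub_zero_esub (a : EReal) (d : ℝ) :
    esub 0 (esub a d) = esub (d : EReal) a := by
  induction a using EReal.rec with
  | top =>
    rw [esub_top_left, esub_top_right (EReal.coe_ne_top _),
      esub_top_right (by simp : (0 : EReal) ≠ ⊤)]
  | bot => rw [esub_bot_coe, esub_bot_right, esub_bot_right]
  | coe r =>
    rw [esub_coe_coe, ← EReal.coe_zero, esub_coe_coe, esub_coe_coe]
    norm_num

/-! ### monotonicity lemmas -/

lemma esub_anti (a : EReal) {d d' : ℝ} (h : d ≤ d') :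
    esub a (d' : EReal) ≤ esub a (d : EReal) := by
  induction a using EReal.rec with
  | top => rw [esub_top_left, esub_top_left]
  | bot => rw [esub_bot_coe, esub_bot_coe]
  | coe r =>
    rw [esub_coe_coe, esub_coe_coe]
    exact EReal.coe_le_coe_iff.2 (by linarith)

lemma esub_left_mono {d d' : ℝ} (h : d ≤ d') (b : EReal) :
    esub (d : EReal) b ≤ esub (d' : EReal) b := by
  induction b using EReal.rec with
  | top => rw [esub_top_right (EReal.coe_ne_top _), esub_top_right (EReal.coe_ne_top _)]
  | bot => rw [esub_bot_right, esub_bot_right]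
  | coe r =>
    rw [esub_coe_coe, esub_coe_coe]
    exact EReal.coe_le_coe_iff.2 (by linarith)

lemma esub_zero_eadd_le {d : ℝ} (hd : 0 ≤ d) (a : EReal) :
    esub 0 (eadd a d) ≤ esub 0 a := by
  induction a using EReal.rec with
  | top => rw [eadd_top_left]
  | bot => rw [eadd_bot_coe]
  | coe r =>
    rw [eadd_coe_coe, ← EReal.coe_zero, esub_coe_coe, esub_coe_coe]
    exact EReal.coe_le_coe_iff.2 (by linarith)

lemma eadd_lt_top {a : EReal} (h : a ≠ ⊤) (d : ℝ) : eadd a (d : EReal) < ⊤ := by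
  induction a using EReal.rec with
  | top => exact absurd rfl h
  | bot => rw [eadd_bot_coe]; exact bot_lt_top
  | coe r => rw [eadd_coe_coe]; exact EReal.coe_lt_top _

lemma nonneg_esub {a : EReal} {d : ℝ} (h : esub (d : EReal) a ≤ 0) :
    0 ≤ esub a (d : EReal) := by
  induction a using EReal.rec with
  | top => rw [esub_top_left]; exact le_top
  | bot =>
    rw [esub_bot_right] at h
    exact absurd (top_le_iff.1 h).symm (by simp)
  | coe r =>
    rw [esub_coe_coe] at h ⊢
    rw [← EReal.coe_zero] at h ⊢
    rw [EReal.coe_le_coe_iff] at h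
    exact EReal.coe_le_coe_iff.2 (by linarith)

lemma esub_nonpos {a : EReal} {d : ℝ} (ha : a ≤ 0) (hd : 0 ≤ d) :
    esub a (d : EReal) ≤ 0 := by
  induction a using EReal.rec with
  | top => exact absurd (top_le_iff.1 ha).symm (by simp)
  | bot => rw [esub_bot_coe]; exact bot_le
  | coe r =>
    rw [esub_coe_coe]
    rw [← EReal.coe_zero] at ha ⊢
    rw [EReal.coe_le_coe_iff] at ha
    exact EReal.coe_le_coe_iff.2 (by linarith)

/-! ### `Cmp.holds` and `Weight` lemmas -/

lemma Cmp.holds_mono {c : Cmp} {r r' b : EReal} (h : r' ≤ r) (hr : c.holds r b) :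
    c.holds r' b := by
  cases c
  · exact lt_of_le_of_lt h hr
  · exact le_trans h hr

lemma Cmp.holds_le {c : Cmp} {r b : EReal} (h : c.holds r b) : r ≤ b := by
  cases c
  · exact le_of_lt h
  · exact h

lemma holds_bot {W : Weight} (h : W ≠ ⟨Cmp.lt, ⊥⟩) : W.cmp.holds ⊥ W.c := by
  obtain ⟨c, v⟩ := W
  cases c with
  | lt =>
    refine bot_lt_iff_ne_bot.2 fun hv => h ?_
    have hv' : v = ⊥ := hv
    rw [hv']
  | le => exact bot_le

lemma holds_coe_top (c : Cmp) (r : ℝ) : c.holds (r : EReal) ⊤ := by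
  cases c
  · exact EReal.coe_lt_top r
  · exact le_top

lemma not_holds_coe_bot (c : Cmp) (r : ℝ) : ¬ c.holds (r : EReal) ⊥ := by
  cases c
  · exact fun h => not_lt_bot h
  · exact fun h => EReal.coe_ne_bot r (le_bot_iff.1 h)

lemma holds_top_elim {c : Cmp} {v : EReal} (h : c.holds ⊤ v) :
    c = Cmp.le ∧ v = ⊤ := by
  cases c
  · exact absurd h not_top_lt
  · exact ⟨rfl, top_le_iff.1 h⟩

lemma holds_lt_top {W : Weight} (h1 : W ≠ ⟨Cmp.le, ⊤⟩) (h2 : W ≠ ⟨Cmp.lt, ⊥⟩)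
    {r : EReal} (hr : W.cmp.holds r W.c) : r < ⊤ := by
  obtain ⟨c, v⟩ := W
  cases c
  · exact lt_of_lt_of_le hr le_top
  · have hv : v ≠ ⊤ := fun hv => h1 (by rw [hv])
    exact lt_of_le_of_lt hr (lt_top_iff_ne_top.2 hv)

lemma weight_le_holds {W W' : Weight} (h : Weight.le W W') {r : EReal}
    (hr : W.cmp.holds r W.c) : W'.cmp.holds r W'.c := by
  have h' : Weight.lt W W' ∨ W = W' := h
  rcases h' with h' | h'
  · have h'' : W.c < W'.c ∨ (W.c = W'.c ∧ W.cmp = Cmp.lt ∧ W'.cmp = Cmp.le) := h'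
    rcases h'' with hc | ⟨hc, h1, h2⟩
    · have hrW : r ≤ W.c := Cmp.holds_le hr
      have hlt : r < W'.c := lt_of_le_of_lt hrW hc
      cases hcW : W'.cmp
      · exact hlt
      · exact le_of_lt hlt
    · rw [h1] at hr
      rw [h2, ← hc]
      exact le_of_lt hr
  · rw [← h']
    exact hr

lemma ne_top_of_le_zero {W : Weight} (h : Weight.le W ⟨Cmp.le, 0⟩) :
    W ≠ ⟨Cmp.le, ⊤⟩ := by
  rintro rfl
  have h' : Weight.lt ⟨Cmp.le, ⊤⟩ ⟨Cmp.le, 0⟩ ∨ (⟨Cmp.le, ⊤⟩ : Weight) = ⟨Cmp.le, 0⟩ := h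
  rcases h' with h' | h'
  · have h'' : (⊤ : EReal) < 0 ∨ ((⊤ : EReal) = 0 ∧ Cmp.le = Cmp.lt ∧ Cmp.le = Cmp.le) := h'
    rcases h'' with hc | ⟨hc, h1, h2⟩
    · exact not_top_lt hc
    · exact EReal.top_ne_zero hc
  · injection h' with h1 h2
    exact EReal.top_ne_zero h2

lemma ereal_exists_real {x : EReal} (h1 : x ≠ ⊥) (h2 : x ≠ ⊤) :
    ∃ r : ℝ, x = (r : EReal) := by
  induction x using EReal.rec with
  | bot => exact absurd rfl h1
  | coe r => exact ⟨r, rfl⟩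
  | top => exact absurd rfl h2

lemma Weight.add_zero_right {W : Weight} (h : W ≠ ⟨Cmp.lt, ⊥⟩) :
    Weight.add W ⟨Cmp.le, 0⟩ = W := by
  obtain ⟨c, v⟩ := W
  have n1 : ¬((⟨c, v⟩ : Weight) = ⟨Cmp.lt, ⊥⟩ ∨ (⟨Cmp.le, 0⟩ : Weight) = ⟨Cmp.lt, ⊥⟩) := by
    rintro (hx | hx)
    · exact h hx
    · injection hx with hx1 hx2
      exact Cmp.noConfusion hx1
  unfold Weight.add
  rw [if_neg n1]
  by_cases h2 : (⟨c, v⟩ : Weight) = ⟨Cmp.le, ⊤⟩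
  · rw [if_pos (Or.inl h2)]; exact h2.symm
  rw [if_neg (by
    rintro (hx | hx)
    · exact h2 hx
    · injection hx with hx1 hx2
      exact absurd hx2 (by simp))]
  by_cases h3 : (⟨c, v⟩ : Weight) = ⟨Cmp.le, ⊥⟩
  · rw [if_pos (Or.inl h3)]; exact h3.symm
  rw [if_neg (by
    rintro (hx | hx)
    · exact h3 hx
    · injection hx with hx1 hx2
      exact absurd hx2 (by simp))]
  by_cases h4 : (⟨c, v⟩ : Weight) = ⟨Cmp.lt, ⊤⟩
  · rw [if_pos (Or.inl h4)]; exact h4.symm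
  rw [if_neg (by
    rintro (hx | hx)
    · exact h4 hx
    · injection hx with hx1 hx2
      exact absurd hx2 (by simp))]
  simp only [Weight.mk.injEq]
  constructor
  · cases c
    · simp
    · simp
  · exact add_zero v

lemma Weight.add_coe_coe (c1 c2 : Cmp) (g g' : ℝ) :
    Weight.add ⟨c1, (g : EReal)⟩ ⟨c2, (g' : EReal)⟩ =
      ⟨if c1 = Cmp.le ∧ c2 = Cmp.le then Cmp.le else Cmp.lt, ((g + g' : ℝ) : EReal)⟩ := by
  unfold Weight.add
  rw [if_neg, if_neg, if_neg, if_neg, EReal.coe_add]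
  all_goals
    rintro (hx | hx) <;> · injection hx with hx1 hx2; simp at hx2

lemma Weight.add_bot_left {W : Weight} (h1 : W ≠ ⟨Cmp.lt, ⊥⟩) (h2 : W ≠ ⟨Cmp.le, ⊤⟩) :
    Weight.add ⟨Cmp.le, ⊥⟩ W = ⟨Cmp.le, ⊥⟩ := by
  unfold Weight.add
  rw [if_neg, if_neg, if_pos (Or.inl rfl)]
  · rintro (hx | hx)
    · injection hx with hx1 hx2; exact absurd hx2 (by simp)
    · exact h2 hx
  · rintro (hx | hx)
    · injection hx with hx1 hx2; exact Cmp.noConfusion hx1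
    · exact h1 hx

/-! ### a one-dimensional Helly-type lemma -/

lemma helly_rays {ι : Type*} [Finite ι] [Nonempty ι] (L U : ι → Set ℝ)
    (hL : ∀ i, ∀ x ∈ L i, ∀ y, x ≤ y → y ∈ L i)
    (hU : ∀ i, ∀ x ∈ U i, ∀ y, y ≤ x → y ∈ U i)
    (hpair : ∀ i j, ∃ x, x ∈ L i ∧ x ∈ U j) :
    ∃ x, ∀ i, x ∈ L i ∧ x ∈ U i := by
  cases nonempty_fintype ι
  have hne : (Finset.univ : Finset ι).Nonempty := Finset.univ_nonempty
  choose f hf1 hf2 using hpair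
  set m : ι → ℝ := fun i => Finset.univ.inf' hne (f i) with hm
  refine ⟨Finset.univ.sup' hne m, fun i => ⟨?_, ?_⟩⟩
  · obtain ⟨b, _, hb⟩ := Finset.exists_mem_eq_inf' hne (f i)
    refine hL i (f i b) (hf1 i b) _ ?_
    calc f i b = m i := hb.symm
    _ ≤ _ := Finset.le_sup' m (Finset.mem_univ i)
  · obtain ⟨a, _, ha⟩ := Finset.exists_mem_eq_sup' hne m
    refine hU i (f a i) (hf2 a i) _ ?_
    calc Finset.univ.sup' hne m = m a := ha
    _ ≤ f a i := Finset.inf'_le (f a) (Finset.mem_univ i)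

/-! ### constructing the delay on the reals -/

lemma exists_delta (ca cb : Cmp) (α β g g' : ℝ)
    (hkey : (α - β < g' + g) ∨ (ca = Cmp.le ∧ cb = Cmp.le ∧ α - β ≤ g' + g))
    (hb0 : cb.holds ((-β : ℝ) : EReal) ((g' : ℝ) : EReal)) :
    ∃ δ : ℝ, 0 ≤ δ ∧ ca.holds ((α - δ : ℝ) : EReal) ((g : ℝ) : EReal) ∧
      cb.holds ((δ - β : ℝ) : EReal) ((g' : ℝ) : EReal) := by
  cases ca with
  | le =>
    cases cb with
    | le =>
      have hb0' : -β ≤ g' := EReal.coe_le_coe_iff.1 hb0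
      have hk : α - β ≤ g' + g := by
        rcases hkey with h | ⟨_, _, h⟩
        · linarith
        · exact h
      refine ⟨max 0 (α - g), le_max_left _ _, ?_, ?_⟩
      · show ((α - max 0 (α - g) : ℝ) : EReal) ≤ ((g : ℝ) : EReal)
        exact EReal.coe_le_coe_iff.2 (by have := le_max_right 0 (α - g); linarith)
      · show ((max 0 (α - g) - β : ℝ) : EReal) ≤ ((g' : ℝ) : EReal)
        refine EReal.coe_le_coe_iff.2 ?_
        rcases max_cases 0 (α - g) with ⟨h1, _⟩ | ⟨h1, _⟩ <;> rw [h1] <;> linarith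
    | lt =>
      have hb0' : -β < g' := EReal.coe_lt_coe_iff.1 hb0
      have hk : α - β < g' + g := by
        rcases hkey with h | ⟨_, h, _⟩
        · exact h
        · exact Cmp.noConfusion h
      refine ⟨max 0 (α - g), le_max_left _ _, ?_, ?_⟩
      · show ((α - max 0 (α - g) : ℝ) : EReal) ≤ ((g : ℝ) : EReal)
        exact EReal.coe_le_coe_iff.2 (by have := le_max_right 0 (α - g); linarith)
      · show ((max 0 (α - g) - β : ℝ) : EReal) < ((g' : ℝ) : EReal)
        refine EReal.coe_lt_coe_iff.2 ?_
        rcases max_cases 0 (α - g) with ⟨h1, _⟩ | ⟨h1, _⟩ <;> rw [h1] <;> linarith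
  | lt =>
    have hk : α - β < g' + g := by
      rcases hkey with h | ⟨h, _, _⟩
      · exact h
      · exact Cmp.noConfusion h
    cases cb with
    | le =>
      have hb0' : -β ≤ g' := EReal.coe_le_coe_iff.1 hb0
      refine ⟨g' + β, by linarith, ?_, ?_⟩
      · show ((α - (g' + β) : ℝ) : EReal) < ((g : ℝ) : EReal)
        exact EReal.coe_lt_coe_iff.2 (by linarith)
      · show ((g' + β - β : ℝ) : EReal) ≤ ((g' : ℝ) : EReal)
        exact EReal.coe_le_coe_iff.2 (by linarith)
    | lt =>
      have hb0' : -β < g' := EReal.coe_lt_coe_iff.1 hb0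
      have hmax : max 0 (α - g) < g' + β := max_lt (by linarith) (by linarith)
      refine ⟨(max 0 (α - g) + (g' + β)) / 2, ?_, ?_, ?_⟩
      · have := le_max_left 0 (α - g); linarith
      · show ((α - (max 0 (α - g) + (g' + β)) / 2 : ℝ) : EReal) < ((g : ℝ) : EReal)
        refine EReal.coe_lt_coe_iff.2 ?_
        have := le_max_right 0 (α - g); linarith
      · show (((max 0 (α - g) + (g' + β)) / 2 - β : ℝ) : EReal) < ((g' : ℝ) : EReal)
        exact EReal.coe_lt_coe_iff.2 (by linarith)

end TimeElapseHelpers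


/-- time elapse on distance graphs: `⟦↑𝔾⟧ = ↑⟦𝔾⟧`. -/
theorem time_elapse {C : Type*} [Finite C] (XF : Set C)
    (G Gup : DGraph C) (hWF : G.WF) (hnorm : G.Normalized XF)
    (hH : ∀ x : C, x ∉ XF →
      Gup.w none (some x) =
        if G.w none (some x) = ⟨Cmp.le, ⊤⟩ then G.w none (some x) else ⟨Cmp.lt, ⊤⟩)
    (hF : ∀ x ∈ XF,
      Gup.w none (some x) =
        if G.w none (some x) = ⟨Cmp.le, ⊥⟩ then G.w none (some x) else ⟨Cmp.le, 0⟩)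
    (hrest : ∀ a b : Option C, a ≠ none → Gup.w a b = G.w a b) :
    Gup.sem XF = elapseSet XF (G.sem XF) := by
  obtain ⟨hstd, hnc, hmin⟩ := hnorm
  have hzt : (0 : EReal) < ⊤ := EReal.zero_lt_top
  apply Set.eq_of_subset_of_subset
  · -- ⟦Gup⟧ ⊆ ↑⟦G⟧
    intro w hw
    have hwf : ∀ a b : Option C,
        (Gup.w a b).cmp.holds (esub (w.toFun b) (w.toFun a)) (Gup.w a b).c := hw
    -- all lower constraints on δ are satisfied at 0
    have hup0 : ∀ b : Option C,
        (G.w b none).cmp.holds (esub (((0:ℝ)) : EReal) (w.toFun b)) (G.w b none).c := by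
      intro b
      cases b with
      | none =>
        rw [G.refl' none]
        show esub (((0:ℝ)) : EReal) (w.toFun none) ≤ ⊤
        exact le_top
      | some x =>
        have h := hwf (some x) none
        rw [hrest (some x) none (by simp), w.zero'] at h
        rwa [EReal.coe_zero]
    -- pairwise compatibility of constraints on δ
    have hpair : ∀ a b : Option C, ∃ t : ℝ,
        t ∈ {t : ℝ | 0 ≤ t ∧
          (G.w none a).cmp.holds (esub (w.toFun a) ((t : ℝ) : EReal)) (G.w none a).c} ∧
        t ∈ {t : ℝ |
          (G.w b none).cmp.holds (esub ((t : ℝ) : EReal) (w.toFun b)) (G.w b none).c} := by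
      intro a b
      simp only [Set.mem_setOf_eq]
      rcases a with _ | y
      · refine ⟨0, ⟨le_rfl, ?_⟩, hup0 b⟩
        rw [G.refl' none]
        show esub (w.toFun none) (((0:ℝ)) : EReal) ≤ ⊤
        exact le_top
      rcases hWa : G.w none (some y) with ⟨ca, va⟩
      have hWFa := hWF none (some y)
      rw [hWa] at hWFa
      by_cases h0 : ca.holds (esub (w.toFun (some y)) (((0:ℝ)) : EReal)) va
      · exact ⟨0, ⟨le_rfl, h0⟩, hup0 b⟩
      have hne_top : (⟨ca, va⟩ : Weight) ≠ ⟨Cmp.le, ⊤⟩ := by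
        intro hEq
        injection hEq with h1 h2
        subst h1; subst h2
        exact h0 le_top
      have hfy_ne_bot : w.toFun (some y) ≠ ⊥ := by
        intro hEq
        apply h0
        rw [hEq, esub_bot_coe]
        exact holds_bot hWFa
      have hfy_lt_top : w.toFun (some y) < ⊤ := by
        by_cases hy : y ∈ XF
        · exact lt_of_le_of_lt (w.fut' y hy) hzt
        · have h := hwf none (some y)
          rw [hH y hy, if_neg (show G.w none (some y) ≠ ⟨Cmp.le, ⊤⟩ from
            by rw [hWa]; exact hne_top), w.zero', esub_zero] at h
          exact h
      obtain ⟨α, hα⟩ := ereal_exists_real hfy_ne_bot hfy_lt_top.ne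
      have hva_ne_bot : va ≠ ⊥ := by
        intro hEq
        subst hEq
        have hcle : ca = Cmp.le := by
          cases ca
          · exact absurd rfl hWFa
          · rfl
        subst hcle
        by_cases hy : y ∈ XF
        · have h := hwf none (some y)
          rw [hF y hy, if_pos hWa, hWa, w.zero', esub_zero, hα] at h
          exact not_holds_coe_bot _ _ h
        · apply hnc
          refine ⟨none, [none, some y, none], ⟨by norm_num, rfl, by simp, by simp [List.Chain']⟩, ?_⟩
          have hcw : G.chainWeight [none, some y, none]
              = Weight.add (G.w none (some y))
                  (Weight.add (G.w (some y) none) ⟨Cmp.le, 0⟩) := rfl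
          rw [hcw, Weight.add_zero_right (hWF (some y) none), hWa,
            Weight.add_bot_left (hWF (some y) none)
              (ne_top_of_le_zero (hstd.2.1 y hy))]
          exact Or.inl (by exact EReal.bot_lt_zero)
      have hva_ne_top : va ≠ ⊤ := by
        intro hEq
        subst hEq
        apply h0
        rw [hα, esub_coe_coe]
        exact holds_coe_top ca _
      obtain ⟨g, hg⟩ := ereal_exists_real hva_ne_bot hva_ne_top
      subst hg
      have hlowbig : ∀ t : ℝ, α - t < g →
          ca.holds (esub (w.toFun (some y)) ((t : ℝ) : EReal)) ((g : ℝ) : EReal) := by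
        intro t ht
        rw [hα, esub_coe_coe]
        cases ca
        · exact EReal.coe_lt_coe_iff.2 ht
        · exact EReal.coe_le_coe_iff.2 ht.le
      have ht0 : α - max 0 (α - g + 1) < g := by
        have := le_max_right 0 (α - g + 1); linarith
      rcases b with _ | x
      · refine ⟨max 0 (α - g + 1), ⟨le_max_left _ _, ?_⟩, ?_⟩
        · exact hlowbig _ ht0
        · rw [G.refl' none]
          show esub _ (w.toFun none) ≤ ⊤
          exact le_top
      have hupb := hup0 (some x)
      by_cases hfx_top : w.toFun (some x) = ⊤
      · refine ⟨max 0 (α - g + 1), ⟨le_max_left _ _, ?_⟩, ?_⟩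
        · exact hlowbig _ ht0
        · rw [hfx_top, esub_top_right (EReal.coe_ne_top _)]
          exact holds_bot (hWF (some x) none)
      by_cases hfx_bot : w.toFun (some x) = ⊥
      · rw [hfx_bot, esub_bot_right] at hupb
        obtain ⟨hcb, hvb⟩ := holds_top_elim hupb
        refine ⟨max 0 (α - g + 1), ⟨le_max_left _ _, ?_⟩, ?_⟩
        · exact hlowbig _ ht0
        · rw [hfx_bot, esub_bot_right, hcb, hvb]
          exact le_refl ⊤
      obtain ⟨β, hβ⟩ := ereal_exists_real hfx_bot hfx_top
      rcases hWb : G.w (some x) none with ⟨cb, vb⟩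
      rw [hWb] at hupb
      rw [hβ, esub_coe_coe] at hupb
      by_cases hvb_top : vb = ⊤
      · subst hvb_top
        refine ⟨max 0 (α - g + 1), ⟨le_max_left _ _, ?_⟩, ?_⟩
        · exact hlowbig _ ht0
        · rw [hβ, esub_coe_coe]
          exact holds_coe_top cb _
      by_cases hvb_bot : vb = ⊥
      · subst hvb_bot
        exact absurd hupb (not_holds_coe_bot _ _)
      obtain ⟨g', hg'⟩ := ereal_exists_real hvb_bot hvb_top
      subst hg'
      have hb0 : cb.holds ((-β : ℝ) : EReal) ((g' : ℝ) : EReal) := by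
        rw [show (-β : ℝ) = 0 - β from (zero_sub β).symm]
        exact hupb
      have hkey : (α - β < g' + g) ∨ (ca = Cmp.le ∧ cb = Cmp.le ∧ α - β ≤ g' + g) := by
        by_cases hxy : (some x : Option C) = some y
        · injection hxy with hxy'
          subst hxy'
          have hβα : β = α := by
            have h2 := hβ.symm.trans hα
            exact_mod_cast h2
          have hcyc : ¬ Weight.lt (G.chainWeight [some x, none, some x]) ⟨Cmp.le, 0⟩ := by
            intro hlt
            exact hnc ⟨some x, [some x, none, some x],
              ⟨by norm_num, rfl, by simp, by simp [List.Chain']⟩, hlt⟩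
          have hcw : G.chainWeight [some x, none, some x]
              = Weight.add (G.w (some x) none)
                  (Weight.add (G.w none (some x)) ⟨Cmp.le, 0⟩) := rfl
          rw [hcw, Weight.add_zero_right (hWF none (some x)), hWa, hWb,
            Weight.add_coe_coe] at hcyc
          have hs0 : 0 ≤ g' + g := by
            by_contra hlt
            apply hcyc
            refine Or.inl ?_
            show ((g' + g : ℝ) : EReal) < ((0 : ℝ) : EReal)
            exact EReal.coe_lt_coe_iff.2 (not_le.1 hlt)
          by_cases hcc : ca = Cmp.le ∧ cb = Cmp.le
          · exact Or.inr ⟨hcc.1, hcc.2, by rw [hβα]; simpa using hs0⟩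
          · left
            rw [hβα, sub_self]
            rcases lt_or_eq_of_le hs0 with h | h
            · exact h
            · exfalso
              apply hcyc
              refine Or.inr ⟨?_, ?_, rfl⟩
              · show ((g' + g : ℝ) : EReal) = ((0 : ℝ) : EReal)
                exact congrArg Real.toEReal h.symm
              · show (if cb = Cmp.le ∧ ca = Cmp.le then Cmp.le else Cmp.lt) = Cmp.lt
                rw [if_neg (fun hcb2 => hcc ⟨hcb2.2, hcb2.1⟩)]
        · have hpath : IsPath [some x, none, some y] (some x) (some y) :=
            ⟨by norm_num, rfl, by simp, by simp [List.Chain']⟩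
          have hmle := hmin (some x) (some y) [some x, none, some y] hxy hpath
          have hcw : G.chainWeight [some x, none, some y]
              = Weight.add (G.w (some x) none)
                  (Weight.add (G.w none (some y)) ⟨Cmp.le, 0⟩) := rfl
          rw [hcw, Weight.add_zero_right (hWF none (some y)), hWa, hWb,
            Weight.add_coe_coe] at hmle
          have hxyw := hwf (some x) (some y)
          rw [hrest (some x) (some y) (by simp), hα, hβ, esub_coe_coe] at hxyw
          have hfin := weight_le_holds hmle hxyw
          by_cases hcc : ca = Cmp.le ∧ cb = Cmp.le
          · refine Or.inr ⟨hcc.1, hcc.2, ?_⟩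
            rw [if_pos ⟨hcc.2, hcc.1⟩] at hfin
            exact EReal.coe_le_coe_iff.1 hfin
          · left
            rw [if_neg (fun h2 => hcc ⟨h2.2, h2.1⟩)] at hfin
            exact EReal.coe_lt_coe_iff.1 hfin
      obtain ⟨δ, hδ0, hδ1, hδ2⟩ := exists_delta ca cb α β g g' hkey hb0
      refine ⟨δ, ⟨hδ0, ?_⟩, ?_⟩
      · rw [hα, esub_coe_coe]
        exact hδ1
      · rw [hβ, esub_coe_coe]
        exact hδ2
    -- combine all constraints
    haveI : Nonempty (Option C) := ⟨none⟩
    haveI := Fintype.ofFinite C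
    haveI : Finite (Option C) := Finite.of_fintype _
    obtain ⟨δ, hδ⟩ := helly_rays
      (fun a : Option C => {t : ℝ | 0 ≤ t ∧
        (G.w none a).cmp.holds (esub (w.toFun a) ((t : ℝ) : EReal)) (G.w none a).c})
      (fun b : Option C => {t : ℝ |
        (G.w b none).cmp.holds (esub ((t : ℝ) : EReal) (w.toFun b)) (G.w b none).c})
      (fun a t ht t' htt' =>
        ⟨le_trans ht.1 htt', Cmp.holds_mono (esub_anti _ htt') ht.2⟩)
      (fun b t ht t' htt' => Cmp.holds_mono (esub_left_mono htt' _) ht)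
      hpair
    have hδ0 : 0 ≤ δ := (hδ none).1.1
    show ∃ v ∈ G.sem XF, ∃ d : ℝ, 0 ≤ d ∧ w.toFun = shift v.toFun d
    refine ⟨⟨fun o => match o with
        | none => 0
        | some x => esub (w.toFun (some x)) ((δ : ℝ) : EReal), rfl, ?_, ?_⟩, ?_, δ, hδ0, ?_⟩
    · -- history clocks stay nonnegative
      intro x hx
      have hup := (hδ (some x)).2
      have h2 : esub ((δ : ℝ) : EReal) (w.toFun (some x)) ≤ 0 :=
        weight_le_holds (hstd.2.1 x hx) hup
      exact nonneg_esub h2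
    · -- future clocks stay nonpositive
      intro x hx
      exact esub_nonpos (w.fut' x hx) hδ0
    · -- the shifted-back valuation satisfies G
      intro a b
      rcases a with _ | x <;> rcases b with _ | y
      · rw [G.refl' none]
        show esub _ _ ≤ ⊤
        exact le_top
      · show (G.w none (some y)).cmp.holds
          (esub (esub (w.toFun (some y)) ((δ : ℝ) : EReal)) 0) (G.w none (some y)).c
        rw [esub_zero]
        exact (hδ (some y)).1.2
      · show (G.w (some x) none).cmp.holds
          (esub 0 (esub (w.toFun (some x)) ((δ : ℝ) : EReal))) (G.w (some x) none).c
        rw [esub_zero_esub]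
        exact (hδ (some x)).2
      · show (G.w (some x) (some y)).cmp.holds
          (esub (esub (w.toFun (some y)) ((δ : ℝ) : EReal))
            (esub (w.toFun (some x)) ((δ : ℝ) : EReal))) (G.w (some x) (some y)).c
        rw [esub_esub_cancel]
        have h := hwf (some x) (some y)
        rwa [hrest (some x) (some y) (by simp)] at h
    · -- w is the shift of v by δ
      funext o
      rcases o with _ | x
      · exact w.zero'
      · show w.toFun (some x) = eadd (esub (w.toFun (some x)) ((δ : ℝ) : EReal)) _
        exact (eadd_esub_cancel _ _).symm
  · -- ↑⟦G⟧ ⊆ ⟦Gup⟧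
    rintro w ⟨v, hv, δ, hδ0, hweq⟩
    have hv' : ∀ a b : Option C,
        (G.w a b).cmp.holds (esub (v.toFun b) (v.toFun a)) (G.w a b).c := hv
    intro a b
    rcases a with _ | x
    · rcases b with _ | y
      · rw [Gup.refl' none]
        show esub _ _ ≤ ⊤
        exact le_top
      · have hvy := hv' none (some y)
        rw [v.zero', esub_zero] at hvy
        have hwy : w.toFun (some y) = eadd (v.toFun (some y)) ((δ : ℝ) : EReal) := by
          rw [hweq]; rfl
        rw [w.zero', esub_zero, hwy]
        by_cases hy : y ∈ XF
        · rw [hF y hy]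
          split_ifs with hbot
          · rw [hbot] at hvy
            have hb : v.toFun (some y) = ⊥ := le_bot_iff.1 hvy
            rw [hb, eadd_bot_coe, hbot]
            exact bot_le
          · show eadd (v.toFun (some y)) ((δ : ℝ) : EReal) ≤ 0
            rw [← hwy]
            exact w.fut' y hy
        · rw [hH y hy]
          split_ifs with htop
          · rw [htop]
            show eadd _ _ ≤ ⊤
            exact le_top
          · show eadd (v.toFun (some y)) ((δ : ℝ) : EReal) < ⊤
            exact eadd_lt_top (holds_lt_top htop (hWF none (some y)) hvy).ne δ
    · rw [hrest (some x) b (by simp)]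
      have hwx : w.toFun (some x) = eadd (v.toFun (some x)) ((δ : ℝ) : EReal) := by
        rw [hweq]; rfl
      rcases b with _ | y
      · have hvx := hv' (some x) none
        rw [v.zero'] at hvx
        rw [w.zero', hwx]
        exact Cmp.holds_mono (esub_zero_eadd_le hδ0 _) hvx
      · have hwy : w.toFun (some y) = eadd (v.toFun (some y)) ((δ : ℝ) : EReal) := by
          rw [hweq]; rfl
        rw [hwx, hwy, esub_eadd_cancel]
        exact hv' (some x) (some y)

end GTA
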